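/- A subset Y of an unbounded metric space X is small if and only if Y is not prethick. -/
import Mathlib


open Metric Bornology Set

variable {X : Type*} [MetricSpace X]

/-- `B(A,r) = ⋃_{a∈A} B(a,r)` where `B(a,r)` is the closed ball of radius `r`. -/
def ballU (A : Set X) (r : ℝ) : Set X := ⋃ a ∈ A, Metric.closedBall a r

/-- `X^#`: the set of ultrafilters on `X` all of whose members are unbounded. -/
def sharp (X : Type*) [MetricSpace X] : Set (Ultrafilter X) :=
  {p | ∀ P ∈ p, ¬ Bornology.IsBounded P}

/-- Parallelity: `p ∥ q` iff there is `r ≥ 0` with `B(Q,r) ∈ p` for every `Q ∈ q`. -/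
def Par (p q : Ultrafilter X) : Prop :=
  ∃ r : ℝ, 0 ≤ r ∧ ∀ Q ∈ q, ballU Q r ∈ p

/-- `p̆ = {q ∈ X^# : q ∥ p}`. -/
def pbreve (p : Ultrafilter X) : Set (Ultrafilter X) :=
  {q | q ∈ sharp X ∧ Par q p}

/-- The `p`-companion `Δ_p(Y) = {q ∈ X^# : Y ∈ q, q ∥ p}`. -/
def Delta (p : Ultrafilter X) (Y : Set X) : Set (Ultrafilter X) :=
  {q | q ∈ sharp X ∧ Y ∈ q ∧ Par q p}

/-- A set `S ⊆ X^#` is invariant if `p ∈ S`, `q ∈ X^#`, `q ∥ p` imply `q ∈ S`. -/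
def Invt (S : Set (Ultrafilter X)) : Prop :=
  ∀ p ∈ S, ∀ q, q ∈ sharp X → Par q p → q ∈ S

/-- `Y` is large if `X = B(Y,r)` for some `r ≥ 0`. -/
def Large (Y : Set X) : Prop := ∃ r : ℝ, 0 ≤ r ∧ ballU Y r = Set.univ

/-- `Y` is thick if for every `r ≥ 0` there is `y ∈ Y` with `B(y,r) ⊆ Y`. -/
def Thick (Y : Set X) : Prop := ∀ r : ℝ, 0 ≤ r → ∃ y ∈ Y, Metric.closedBall y r ⊆ Y

/-- `Y` is prethick if `B(Y,r)` is thick for some `r ≥ 0`. -/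
def Prethick (Y : Set X) : Prop := ∃ r : ℝ, 0 ≤ r ∧ Thick (ballU Y r)

/-- `Y` is small if `(X∖Y) ∩ L` is large for every large `L`. -/
def SmallSet (Y : Set X) : Prop := ∀ L : Set X, Large L → Large (Yᶜ ∩ L)

/-- `Y` is thin if for each `r ≥ 0` there is a bounded `V` with
`B(y,r) ∩ Y = {y}` for all `y ∈ Y∖V`. -/
def Thin (Y : Set X) : Prop :=
  ∀ r : ℝ, 0 ≤ r → ∃ V : Set X, Bornology.IsBounded V ∧
    ∀ y ∈ Y \ V, Metric.closedBall y r ∩ Y = {y}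

/-- `Y` is `n`-thin if for each `r ≥ 0` there is a bounded `V` with
`|B(y,r) ∩ Y| ≤ n` for all `y ∈ Y∖V`. -/
def NThin (n : ℕ) (Y : Set X) : Prop :=
  ∀ r : ℝ, 0 ≤ r → ∃ V : Set X, Bornology.IsBounded V ∧
    ∀ y ∈ Y \ V, (Metric.closedBall y r ∩ Y).encard ≤ n

/-- `M` is a minimal nonempty closed invariant subset of `X^#`
(closures/closedness taken in the Stone topology on ultrafilters). -/
def MinCI (M : Set (Ultrafilter X)) : Prop :=
  M ⊆ sharp X ∧ M.Nonempty ∧ IsClosed M ∧ Invt M ∧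
    ∀ S ⊆ M, S.Nonempty → IsClosed S → Invt S → S = M


lemma mem_ballU' {X : Type*} [MetricSpace X] {A : Set X} {r : ℝ} {x : X} :
    x ∈ ballU A r ↔ ∃ a ∈ A, dist x a ≤ r := by
  simp [ballU]

theorem stmt11 (hX : ¬ Bornology.IsBounded (Set.univ : Set X)) (Y : Set X) :
    SmallSet Y ↔ ¬ Prethick Y := by
  constructor
  · rintro hS ⟨r, hr, hth⟩
    have hL : Large ((ballU Y r)ᶜ ∪ Y) := by
      refine ⟨r, hr, ?_⟩
      ext x; simp only [Set.mem_univ, iff_true]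
      by_cases hx : x ∈ ballU Y r
      · obtain ⟨a, ha, hd⟩ := mem_ballU'.mp hx
        exact mem_ballU'.mpr ⟨a, Or.inr ha, hd⟩
      · exact mem_ballU'.mpr ⟨x, Or.inl hx, by simp [hr]⟩
    have h2 := hS _ hL
    have hsub : Y ⊆ ballU Y r := fun y hy => mem_ballU'.mpr ⟨y, hy, by simp [hr]⟩
    have heq : Yᶜ ∩ ((ballU Y r)ᶜ ∪ Y) = (ballU Y r)ᶜ := by
      ext x
      constructor
      · rintro ⟨hxc, hx | hx⟩
        · exact hx
        · exact absurd hx hxc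
      · intro hx; exact ⟨fun hy => hx (hsub hy), Or.inl hx⟩
    rw [heq] at h2
    obtain ⟨t, ht, hun⟩ := h2
    obtain ⟨y, hy, hb⟩ := hth t ht
    have hy2 : y ∈ ballU (ballU Y r)ᶜ t := hun ▸ Set.mem_univ y
    obtain ⟨w, hw, hd⟩ := mem_ballU'.mp hy2
    exact hw (hb (by simpa [Metric.mem_closedBall, dist_comm] using hd))
  · rintro hP L ⟨t, ht, hLu⟩
    have hnt : ¬ Thick (ballU Y t) := fun h => hP ⟨t, ht, h⟩
    simp only [Thick] at hnt
    push_neg at hnt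
    obtain ⟨s, hs, hns⟩ := hnt
    refine ⟨s + t, by linarith, ?_⟩
    ext x; simp only [Set.mem_univ, iff_true]
    have hz : ∃ z, dist x z ≤ s ∧ z ∉ ballU Y t := by
      by_cases hx : x ∈ ballU Y t
      · obtain ⟨z, hz1, hz2⟩ := Set.not_subset.mp (hns x hx)
        exact ⟨z, by simpa [Metric.mem_closedBall, dist_comm] using hz1, hz2⟩
      · exact ⟨x, by simp [hs], hx⟩
    obtain ⟨z, hzx, hz⟩ := hz
    have hz2 : z ∈ ballU L t := hLu ▸ Set.mem_univ z
    obtain ⟨w, hw, hwd⟩ := mem_ballU'.mp hz2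
    have hwY : w ∉ Y := fun hwY => hz (mem_ballU'.mpr ⟨w, hwY, hwd⟩)
    refine mem_ballU'.mpr ⟨w, ⟨hwY, hw⟩, ?_⟩
    calc dist x w ≤ dist x z + dist z w := dist_triangle _ _ _
      _ ≤ s + t := add_le_add hzx hwd
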